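/- arXiv:1712.04631 — 5 statements merged into one kernel-verified Lean document; each statement's English description precedes it below -/
import Mathlib

section
/- Let K be a field of characteristic different from 2 and let L be a nilpotent Lie algebra over K of dimension 3. Then L is isomorphic either to the 3-dimensional abelian Lie algebra K³, or to the Heisenberg algebra h(1) over K, the 3-dimensional Lie algebra with basis v_1, v_2, v_3 whose only nonzero bracket among basis elements is [v_1, v_2] = v_3 = −[v_2, v_1]. -/
noncomputable section

/-!
The Heisenberg Lie algebra `h(m)` over a commutative ring `R`: the
`(2m+1)`-dimensional Lie algebra with basis `v₁, ..., v_{2m}, v`, whose only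
nonzero brackets among basis elements are `[v_{2i-1}, v_{2i}] = v = -[v_{2i}, v_{2i-1}]`.
An element is encoded as `((p, q), t)` where `p i` is the coordinate along
`v_{2i-1}` (for `i = 1, ..., m`), `q i` is the coordinate along `v_{2i}`, and
`t` is the coordinate along the central element `v`.
-/

/-- The underlying module of the Heisenberg algebra `h(m)` over `R`. -/
def Heis (R : Type*) [CommRing R] (m : ℕ) : Type _ := ((Fin m → R) × (Fin m → R)) × R

namespace Heis

variable {R : Type*} [CommRing R] {m : ℕ}

instance : AddCommGroup (Heis R m) :=
  inferInstanceAs (AddCommGroup (((Fin m → R) × (Fin m → R)) × R))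
instance : Module R (Heis R m) :=
  inferInstanceAs (Module R (((Fin m → R) × (Fin m → R)) × R))

/-- The standard symplectic form encoding the structure constants of `h(m)`. -/
def omega (x y : ((Fin m → R) × (Fin m → R)) × R) : R :=
  ∑ i : Fin m, (x.1.1 i * y.1.2 i - x.1.2 i * y.1.1 i)

/-- The bracket of `h(m)`: it takes values in the central line spanned by `v`. -/
def br (x y : ((Fin m → R) × (Fin m → R)) × R) : ((Fin m → R) × (Fin m → R)) × R :=
  (0, omega x y)

lemma br_add_left (x y z : ((Fin m → R) × (Fin m → R)) × R) :
    br (x + y) z = br x z + br y z := by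
  simp only [br, Prod.mk_add_mk, add_zero, Prod.mk.injEq, zero_add]
  refine ⟨by simp, ?_⟩
  simp only [omega, ← Finset.sum_add_distrib, Prod.fst_add, Prod.snd_add, Pi.add_apply]
  exact Finset.sum_congr rfl fun i _ => by ring

lemma br_add_right (x y z : ((Fin m → R) × (Fin m → R)) × R) :
    br x (y + z) = br x y + br x z := by
  simp only [br, Prod.mk_add_mk, add_zero, Prod.mk.injEq, zero_add]
  refine ⟨by simp, ?_⟩
  simp only [omega, ← Finset.sum_add_distrib, Prod.fst_add, Prod.snd_add, Pi.add_apply]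
  exact Finset.sum_congr rfl fun i _ => by ring

lemma omega_br_right (x y z : ((Fin m → R) × (Fin m → R)) × R) :
    omega x (br y z) = 0 := by
  simp [omega, br]

lemma omega_br_left (x y z : ((Fin m → R) × (Fin m → R)) × R) :
    omega (br x y) z = 0 := by
  simp [omega, br]

lemma br_self (x : ((Fin m → R) × (Fin m → R)) × R) : br x x = 0 := by
  have h : omega x x = 0 := Finset.sum_eq_zero fun i _ => by ring
  simp [br, h, Prod.ext_iff]

lemma br_leibniz (x y z : ((Fin m → R) × (Fin m → R)) × R) :
    br x (br y z) = br (br x y) z + br y (br x z) := by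
  show ((0, omega x (br y z)) : ((Fin m → R) × (Fin m → R)) × R) =
    (0, omega (br x y) z) + (0, omega y (br x z))
  rw [omega_br_right, omega_br_left, omega_br_right]
  simp

lemma br_smul (c : R) (x y : ((Fin m → R) × (Fin m → R)) × R) :
    br x (c • y) = c • br x y := by
  have h : omega x (c • y) = c * omega x y := by
    simp only [omega, Finset.mul_sum, Prod.smul_fst, Prod.smul_snd, Pi.smul_apply, smul_eq_mul]
    exact Finset.sum_congr rfl fun i _ => by ring
  simp [br, h, Prod.ext_iff, smul_eq_mul]

instance : LieRing (Heis R m) where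
  bracket x y := br x y
  add_lie x y z := br_add_left x y z
  lie_add x y z := br_add_right x y z
  lie_self x := br_self x
  leibniz_lie x y z := br_leibniz x y z

instance : LieAlgebra R (Heis R m) where
  lie_smul c x y := br_smul c x y

/-- The basis vector `v_{2i-1}` of `h(m)`. -/
def vodd (i : Fin m) : Heis R m := (((Pi.single i 1 : Fin m → R), 0), 0)

/-- The basis vector `v_{2i}` of `h(m)`. -/
def veven (i : Fin m) : Heis R m := (((0 : Fin m → R), (Pi.single i 1 : Fin m → R)), 0)

/-- The central basis vector `v` of `h(m)`. -/
def vz : Heis R m := ((0, 0), 1)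

end Heis

/-- The abelian Lie algebra of dimension `n` over `K` (i.e. `Kⁿ` with zero bracket). -/
def AbelianLie (K : Type*) [CommRing K] (n : ℕ) : Type _ := Fin n → K

namespace AbelianLie

variable {K : Type*} [CommRing K] {n : ℕ}

instance : AddCommGroup (AbelianLie K n) := inferInstanceAs (AddCommGroup (Fin n → K))
instance : Module K (AbelianLie K n) := inferInstanceAs (Module K (Fin n → K))

instance : LieRing (AbelianLie K n) where
  bracket _ _ := 0
  add_lie _ _ _ := (zero_add 0).symm
  lie_add _ _ _ := (zero_add 0).symm
  lie_self _ := rfl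
  leibniz_lie _ _ _ := (zero_add 0).symm

instance : LieAlgebra K (AbelianLie K n) where
  lie_smul c _ _ := (smul_zero c).symm

instance : IsLieAbelian (AbelianLie K n) := ⟨fun _ _ => rfl⟩

end AbelianLie

section AuxClassification

variable {K : Type*} [Field K] {L : Type*} [LieRing L] [LieAlgebra K L]
  [LieModule.IsNilpotent L L]

private lemma eig0 {x w : L} (hw : w ≠ 0) {μ : K} (h : ⁅x, w⁆ = μ • w) : μ = 0 := by
  obtain ⟨n, hn⟩ := LieModule.isNilpotent_toEnd_of_isNilpotent K L L x
  have key : ∀ k, ((LieModule.toEnd K L L x) ^ k) w = μ ^ k • w := by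
    intro k
    induction k with
    | zero => simp
    | succ k ih =>
      rw [pow_succ', Module.End.mul_apply, ih, map_smul, LieModule.toEnd_apply_apply, h,
        smul_smul, ← pow_succ]
  have hkey := key n
  rw [hn] at hkey
  simp only [LinearMap.zero_apply] at hkey
  rcases smul_eq_zero.mp hkey.symm with h' | h'
  · exact (pow_eq_zero_iff'.mp h').1
  · exact absurd h' hw

private lemma adPow3 (hdim : Module.finrank K L = 3) (x : L) :
    (LieModule.toEnd K L L x) ^ 3 = 0 := by
  have : FiniteDimensional K L := Module.finite_of_finrank_eq_succ hdim
  obtain ⟨n, hn⟩ := LieModule.isNilpotent_toEnd_of_isNilpotent K L L x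
  have h1 : LinearMap.ker ((LieModule.toEnd K L L x) ^ n) = ⊤ := by
    rw [hn]; exact LinearMap.ker_zero
  have h2 := Module.End.ker_pow_le_ker_pow_finrank (LieModule.toEnd K L L x) n
  rw [h1, top_le_iff, hdim] at h2
  exact LinearMap.ker_eq_top.mp h2

private lemma heis_smul_def {R : Type*} [CommRing R] {m : ℕ} (t : R) (x : Heis R m) :
    t • x = ((t • x.1.1, t • x.1.2), t * x.2) := rfl

private lemma heis_bracket_def {R : Type*} [CommRing R] {m : ℕ} (x y : Heis R m) :
    ⁅x, y⁆ = Heis.br x y := rfl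

/-- Auxiliary linear equivalence between `Fin 3 → K` and `Heis K 1`. -/
private def heisAux (K : Type*) [Field K] : (Fin 3 → K) ≃ₗ[K] Heis K 1 where
  toFun f := ((fun _ => f 0, fun _ => f 1), f 2)
  invFun x := ![x.1.1 0, x.1.2 0, x.2]
  map_add' f g := rfl
  map_smul' t f := rfl
  left_inv f := by funext i; fin_cases i <;> rfl
  right_inv x := by
    refine Prod.ext (Prod.ext ?_ ?_) rfl <;>
      · funext i
        rw [Subsingleton.elim i (0 : Fin 1)]
        rfl

private lemma heisAux_apply (K : Type*) [Field K] (f : Fin 3 → K) :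
    heisAux K f = ((fun _ => f 0, fun _ => f 1), f 2) := rfl

end AuxClassification

/-- (de Graaf's classification in dimension 3.) Over a field `K` of
characteristic `≠ 2`, every nilpotent Lie algebra of dimension 3 is isomorphic either
to the abelian Lie algebra `K³`, or to the Heisenberg algebra `h(1)` over `K`. -/
theorem nilpotent_lieAlgebra_dim3_classification {K : Type*} [Field K]
    (hchar : ringChar K ≠ 2) {L : Type*} [LieRing L] [LieAlgebra K L]
    [LieModule.IsNilpotent L L] (hdim : Module.finrank K L = 3) :
    Nonempty (L ≃ₗ⁅K⁆ AbelianLie K 3) ∨ Nonempty (L ≃ₗ⁅K⁆ Heis K 1) := by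
  have hfin : FiniteDimensional K L := Module.finite_of_finrank_eq_succ hdim
  by_cases habel : ∀ x y : L, ⁅x, y⁆ = 0
  · left
    refine ⟨{ ((Module.finBasisOfFinrankEq K L hdim).equivFun : L ≃ₗ[K] AbelianLie K 3) with
      map_lie' := ?_ }⟩
    intro x y
    show (Module.finBasisOfFinrankEq K L hdim).equivFun ⁅x, y⁆ = _
    rw [habel x y, map_zero]
    rfl
  · right
    push_neg at habel
    obtain ⟨a, b, hcne⟩ := habel
    set c : L := ⁅a, b⁆ with hc
    have hab' : ⁅a, b⁆ = c := hc.symm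
    have hba : ⁅b, a⁆ = -c := by rw [← lie_skew, hab']
    have ha0 : a ≠ 0 := fun h => hcne (by rw [hc, h, zero_lie])
    have hb0 : b ≠ 0 := fun h => hcne (by rw [hc, h, lie_zero])
    have eig : ∀ x w : L, w ≠ 0 → ∀ ν μ : K, ν ≠ 0 → ν • ⁅x, w⁆ = μ • w → μ = 0 := by
      intro x w hw ν μ hν h
      have h' : ⁅x, w⁆ = (ν⁻¹ * μ) • w := by
        rw [← smul_smul, ← h, smul_smul, inv_mul_cancel₀ hν, one_smul]
      have h0 := eig0 hw h'
      exact (mul_eq_zero.mp h0).resolve_left (inv_ne_zero hν)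
    have hli : LinearIndependent K ![a, b, c] := by
      rw [Fintype.linearIndependent_iff]
      intro g hg
      rw [Fin.sum_univ_three] at hg
      simp only [Matrix.cons_val_zero, Matrix.cons_val_one, Matrix.head_cons,
        Matrix.cons_val_two, Matrix.tail_cons] at hg
      have h2 : g 2 = 0 := by
        by_contra h2
        have kA : g 2 • ⁅a, c⁆ = (-(g 1)) • c := by
          have h := congrArg (fun v => ⁅a, v⁆) hg
          simp only [lie_add, lie_smul, lie_self, smul_zero, lie_zero, zero_add, add_zero,
            hab'] at h
          linear_combination (norm := module) h
        have kB : g 2 • ⁅b, c⁆ = (g 0) • c := by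
          have h := congrArg (fun v => ⁅b, v⁆) hg
          simp only [lie_add, lie_smul, lie_self, smul_zero, lie_zero, zero_add, add_zero,
            hba] at h
          linear_combination (norm := module) h
        have hg1 : -(g 1) = 0 := eig a c hcne _ _ h2 kA
        have hg0 : g 0 = 0 := eig b c hcne _ _ h2 kB
        rw [neg_eq_zero] at hg1
        rw [hg0, hg1, zero_smul, zero_smul, zero_add, zero_add] at hg
        exact hcne ((smul_eq_zero.mp hg).resolve_left h2)
      have h1 : g 1 = 0 := by
        by_contra h1
        have hcz : g 1 • c = 0 := by
          have h := congrArg (fun v => ⁅a, v⁆) hg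
          simp only [h2, zero_smul, add_zero, lie_add, lie_smul, lie_self, smul_zero,
            lie_zero, zero_add, hab'] at h
          exact h
        exact hcne ((smul_eq_zero.mp hcz).resolve_left h1)
      have h0 : g 0 = 0 := by
        rw [h1, h2, zero_smul, zero_smul, add_zero, add_zero] at hg
        exact (smul_eq_zero.mp hg).resolve_right ha0
      intro i
      fin_cases i <;> assumption
    obtain ⟨B, hB⟩ : ∃ B : Module.Basis (Fin 3) K L, ⇑B = ![a, b, c] :=
      ⟨basisOfLinearIndependentOfCardEqFinrank hli (by simp [hdim]),
        coe_basisOfLinearIndependentOfCardEqFinrank _ _⟩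
    have decomp : ∀ x : L, x = B.equivFun x 0 • a + B.equivFun x 1 • b + B.equivFun x 2 • c := by
      intro x
      conv_lhs => rw [← B.sum_equivFun x]
      rw [Fin.sum_univ_three, hB]
      simp
    have coeffs : ∀ p q r : K, p • a + q • b + r • c = 0 → p = 0 ∧ q = 0 ∧ r = 0 := by
      intro p q r h
      have h' := Fintype.linearIndependent_iff.mp hli ![p, q, r]
        (by rw [Fin.sum_univ_three]; simpa using h)
      exact ⟨h' 0, h' 1, h' 2⟩
    have hadc : ∀ x : L, ⁅x, ⁅x, ⁅x, c⁆⁆⁆ = 0 := by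
      intro x
      have h := congrFun (congrArg DFunLike.coe (adPow3 hdim x)) c
      rw [pow_succ, pow_succ, pow_one, Module.End.mul_apply, Module.End.mul_apply] at h
      simpa only [LieModule.toEnd_apply_apply, LinearMap.zero_apply] using h
    have hac : ⁅a, c⁆ = 0 := by
      obtain ⟨P, Q, R, hPQR⟩ : ∃ P Q R : K, ⁅a, c⁆ = P • a + Q • b + R • c :=
        ⟨_, _, _, decomp _⟩
      have h3 : (Q * P + R * R * P) • a + (Q * Q + R * R * Q) • b
          + (2 * Q * R + R * R * R) • c = 0 := by
        have h := hadc a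
        simp only [hPQR, lie_add, lie_smul, lie_self, smul_zero, zero_add, add_zero,
          hab'] at h
        linear_combination (norm := module) h
      obtain ⟨e1, e2, e3⟩ := coeffs _ _ _ h3
      have hR : R = 0 := by
        rcases mul_eq_zero.mp (show Q * (Q + R * R) = 0 by linear_combination e2) with h | h
        · have h' : R ^ 3 = 0 := by linear_combination e3 - 2 * R * h
          exact pow_eq_zero_iff (by norm_num) |>.mp h'
        · have h' : R ^ 3 = 0 := by linear_combination 2 * R * h - e3
          exact pow_eq_zero_iff (by norm_num) |>.mp h'
      have hQ : Q = 0 := by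
        have h' : Q * Q = 0 := by linear_combination e2 - R * Q * hR
        exact mul_self_eq_zero.mp h'
      have hPa : ⁅c, a⁆ = (-P) • a := by
        rw [← lie_skew, hPQR, hQ, hR]
        module
      have hP : P = 0 := neg_eq_zero.mp (eig0 ha0 hPa)
      rw [hPQR, hP, hQ, hR]
      simp
    have hbc : ⁅b, c⁆ = 0 := by
      obtain ⟨S, T, U, hSTU⟩ : ∃ S T U : K, ⁅b, c⁆ = S • a + T • b + U • c :=
        ⟨_, _, _, decomp _⟩
      have h3 : ((U * U - S) * S) • a + ((U * U - S) * T) • b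
          + (U * U * U - 2 * U * S) • c = 0 := by
        have h := hadc b
        simp only [hSTU, lie_add, lie_smul, lie_self, lie_neg, smul_neg, neg_smul, smul_zero,
          zero_add, add_zero, hba] at h
        linear_combination (norm := module) h
      obtain ⟨e1, e2, e3⟩ := coeffs _ _ _ h3
      have hU : U = 0 := by
        rcases mul_eq_zero.mp e1 with h | h
        · have h' : U ^ 3 = 0 := by linear_combination (-1 : K) * e3 + 2 * U * h
          exact pow_eq_zero_iff (by norm_num) |>.mp h'
        · have h' : U ^ 3 = 0 := by linear_combination e3 + 2 * U * h
          exact pow_eq_zero_iff (by norm_num) |>.mp h'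
      have hS : S = 0 := by
        rcases mul_eq_zero.mp e1 with h | h
        · linear_combination (-1 : K) * h + U * hU
        · exact h
      have hT : T = 0 := by
        have hTb : ⁅c, b⁆ = (-T) • b := by
          rw [← lie_skew, hSTU, hS, hU]
          module
        exact neg_eq_zero.mp (eig0 hb0 hTb)
      rw [hSTU, hS, hT, hU]
      simp
    have hca : ⁅c, a⁆ = 0 := by rw [← lie_skew, hac, neg_zero]
    have hcb : ⁅c, b⁆ = 0 := by rw [← lie_skew, hbc, neg_zero]
    have hbrkt : ∀ x y : L, ⁅x, y⁆ =
        (B.equivFun x 0 * B.equivFun y 1 - B.equivFun x 1 * B.equivFun y 0) • c := by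
      intro x y
      conv_lhs => rw [decomp x, decomp y]
      simp only [lie_add, add_lie, lie_smul, smul_lie, lie_self, hab', hba, hac, hbc, hca, hcb,
        smul_zero, zero_add, add_zero, lie_zero, zero_smul, smul_neg]
      module
    have hFc : B.equivFun c = fun j => if (2 : Fin 3) = j then 1 else 0 := by
      have hcB : c = B 2 := by rw [hB]; rfl
      funext j
      rw [hcB, B.equivFun_self]
    refine ⟨{ (B.equivFun.trans (heisAux K)) with map_lie' := ?_ }⟩
    intro x y
    show (heisAux K) (B.equivFun ⁅x, y⁆) =
      ⁅(heisAux K) (B.equivFun x), (heisAux K) (B.equivFun y)⁆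
    rw [hbrkt x y, map_smul, map_smul, hFc, heis_bracket_def]
    refine Prod.ext (Prod.ext (funext fun i => ?_) (funext fun i => ?_)) ?_ <;>
      · simp only [heis_smul_def]
        simp [heisAux_apply, Heis.br, Heis.omega, Fin.sum_univ_one, heis_smul_def,
          Pi.smul_apply, smul_eq_mul, mul_zero, mul_one]
end
end

section
/- Let K be a field of characteristic different from 2 and let L be a nilpotent Lie algebra over K of dimension 4. Then L is isomorphic to one of the following: the 4-dimensional abelian Lie algebra K⁴; the direct product h(1) × K of the Heisenberg algebra h(1) with the 1-dimensional abelian Lie algebra; or the Lie algebra l_{4,3} with basis v_1, v_2, v_3, v_4 whose only nonzero brackets among basis elements are [v_1, v_2] = v_3 and [v_1, v_3] = v_4 (and their antisymmetric counterparts). -/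
noncomputable section
set_option linter.unnecessarySeqFocus false

/-- The nilpotent Lie algebra `l_{4,3}` over `K`: basis `v₁, v₂, v₃, v₄` with
`[v₁,v₂] = v₃` and `[v₁,v₃] = v₄` the only nonzero brackets among basis elements. -/
def L43 (K : Type*) [CommRing K] : Type _ := Fin 4 → K

namespace L43

variable {K : Type*} [CommRing K]

instance : AddCommGroup (L43 K) := inferInstanceAs (AddCommGroup (Fin 4 → K))
instance : Module K (L43 K) := inferInstanceAs (Module K (Fin 4 → K))

/-- The bracket of `l_{4,3}` in coordinates. -/
def br (x y : Fin 4 → K) : Fin 4 → K :=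
  ![0, 0, x 0 * y 1 - x 1 * y 0, x 0 * y 2 - x 2 * y 0]

lemma br_add_left (x y z : Fin 4 → K) : br (x + y) z = br x z + br y z := by
  funext i
  fin_cases i <;> simp [br] <;> ring

lemma br_add_right (x y z : Fin 4 → K) : br x (y + z) = br x y + br x z := by
  funext i
  fin_cases i <;> simp [br] <;> ring

lemma br_self (x : Fin 4 → K) : br x x = 0 := by
  funext i
  fin_cases i <;> simp [br] <;> ring

lemma br_leibniz (x y z : Fin 4 → K) :
    br x (br y z) = br (br x y) z + br y (br x z) := by
  funext i
  fin_cases i <;> simp [br] <;> ring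

lemma br_smul (c : K) (x y : Fin 4 → K) : br x (c • y) = c • br x y := by
  funext i
  fin_cases i <;> simp [br] <;> ring

instance : LieRing (L43 K) where
  bracket x y := br x y
  add_lie x y z := br_add_left x y z
  lie_add x y z := br_add_right x y z
  lie_self x := br_self x
  leibniz_lie x y z := br_leibniz x y z

instance : LieAlgebra K (L43 K) where
  lie_smul c x y := br_smul c x y

end L43

/-! The direct product of two Lie algebras, with componentwise bracket. -/

section ProdLie

variable {R : Type*} [CommRing R] {L M : Type*} [LieRing L] [LieRing M]

instance Prod.instBracketLie : Bracket (L × M) (L × M) :=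
  ⟨fun x y => (⁅x.1, y.1⁆, ⁅x.2, y.2⁆)⟩

@[simp] lemma Prod.bracket_def (x y : L × M) : ⁅x, y⁆ = (⁅x.1, y.1⁆, ⁅x.2, y.2⁆) := rfl

instance Prod.instLieRing : LieRing (L × M) where
  add_lie x y z := Prod.ext (add_lie x.1 y.1 z.1) (add_lie x.2 y.2 z.2)
  lie_add x y z := Prod.ext (lie_add x.1 y.1 z.1) (lie_add x.2 y.2 z.2)
  lie_self x := Prod.ext (lie_self x.1) (lie_self x.2)
  leibniz_lie x y z := Prod.ext (leibniz_lie x.1 y.1 z.1) (leibniz_lie x.2 y.2 z.2)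

instance Prod.instLieAlgebra [LieAlgebra R L] [LieAlgebra R M] : LieAlgebra R (L × M) where
  lie_smul c x y := Prod.ext (lie_smul c x.1 y.1) (lie_smul c x.2 y.2)

end ProdLie


section Aux
variable {K : Type*} [Field K] {L : Type*} [LieRing L] [LieAlgebra K L]

lemma aux_lcs_succ_le (k : ℕ) (p : Submodule K L)
    (h : ∀ x y : L, y ∈ LieModule.lowerCentralSeries K L L k → ⁅x, y⁆ ∈ p) :
    ∀ m ∈ LieModule.lowerCentralSeries K L L (k+1), m ∈ p := by
  intro m hm
  rw [LieModule.lowerCentralSeries_succ, ← LieSubmodule.mem_toSubmodule,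
    LieSubmodule.lieIdeal_oper_eq_linear_span'] at hm
  refine Submodule.span_induction ?_ p.zero_mem (fun a b _ _ ha hb => p.add_mem ha hb)
    (fun t a _ ha => p.smul_mem t ha) hm
  rintro m' ⟨x, -, n, hn, rfl⟩
  exact h x n hn

lemma aux_lie_mem (k : ℕ) {y : L} (x : L) (hy : y ∈ LieModule.lowerCentralSeries K L L k) :
    ⁅x, y⁆ ∈ LieModule.lowerCentralSeries K L L (k+1) := by
  rw [LieModule.lowerCentralSeries_succ]
  exact LieSubmodule.lie_mem_lie (LieSubmodule.mem_top x) hy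

lemma aux_lcs_lt [LieRing.IsNilpotent L] {k : ℕ}
    (h : LieModule.lowerCentralSeries K L L k ≠ ⊥) :
    LieModule.lowerCentralSeries K L L (k+1) < LieModule.lowerCentralSeries K L L k := by
  rcases lt_or_eq_of_le (LieModule.antitone_lowerCentralSeries K L L (Nat.le_succ k)) with hlt | heq
  · exact hlt
  · exfalso; apply h
    have hstab : ∀ m, k ≤ m → LieModule.lowerCentralSeries K L L m = LieModule.lowerCentralSeries K L L k := by
      intro m hm
      induction m with
      | zero =>
        obtain rfl : k = 0 := Nat.le_zero.mp hm
        rfl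
      | succ n ih =>
        rcases Nat.lt_or_ge n k with h1 | h1
        · have : k = n + 1 := by omega
          rw [this]
        · rw [LieModule.lowerCentralSeries_succ, ih h1, ← LieModule.lowerCentralSeries_succ, ← heq]
    obtain ⟨n, hn⟩ := LieModule.IsNilpotent.nilpotent K L L
    rcases le_total k n with h1 | h1
    · rw [← hstab n h1, hn]
    · exact le_bot_iff.mp (hn ▸ LieModule.antitone_lowerCentralSeries K L L h1)

lemma aux_lt_sup_span {p : Submodule K L} {x : L} (hx : x ∉ p) : p < p ⊔ K ∙ x :=
  lt_of_le_of_ne le_sup_left fun h => hx (by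
    rw [h]; exact Submodule.mem_sup_right (Submodule.mem_span_singleton_self x))

lemma aux_lieEquiv_of_basis {K L M : Type*} [Field K] [LieRing L] [LieAlgebra K L]
    [LieRing M] [LieAlgebra K M] {ι : Type*} [Fintype ι] [DecidableEq ι]
    (b : Module.Basis ι K L) (c : Module.Basis ι K M)
    (h : ∀ i j, (b.equiv c (Equiv.refl ι)) ⁅b i, b j⁆ = ⁅c i, c j⁆) :
    Nonempty (L ≃ₗ⁅K⁆ M) := by
  set f := b.equiv c (Equiv.refl ι) with hf
  have key : ∀ x y : L, f ⁅x, y⁆ = ⁅f x, f y⁆ := by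
    let B1 : L →ₗ[K] L →ₗ[K] M := LinearMap.mk₂ K (fun x y => f ⁅x, y⁆)
      (fun x y z => by simp [add_lie]) (fun t x y => by simp [smul_lie])
      (fun x y z => by simp [lie_add]) (fun t x y => by simp [lie_smul])
    let B2 : L →ₗ[K] L →ₗ[K] M := LinearMap.mk₂ K (fun x y => ⁅f x, f y⁆)
      (fun x y z => by simp [add_lie]) (fun t x y => by simp [smul_lie])
      (fun x y z => by simp [lie_add]) (fun t x y => by simp [lie_smul])
    have heq : B1 = B2 := LinearMap.ext_basis b b (fun i j => by
      simp only [B1, B2, LinearMap.mk₂_apply]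
      rw [h i j, Module.Basis.equiv_apply, Module.Basis.equiv_apply, Equiv.refl_apply, Equiv.refl_apply])
    intro x y
    exact DFunLike.congr_fun (DFunLike.congr_fun heq x) y
  exact ⟨{ toLinearMap := (f : L →ₗ[K] M), map_lie' := fun {x y} => key x y,
           invFun := f.symm, left_inv := f.left_inv, right_inv := f.right_inv }⟩

lemma aux_coe_lt {N N' : LieSubmodule K L L} (h : N < N') :
    LieSubmodule.toSubmodule N < LieSubmodule.toSubmodule N' := by
  rw [lt_iff_le_not_ge] at h ⊢
  exact ⟨(LieSubmodule.toSubmodule_le_toSubmodule _ _).2 h.1,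
    fun c => h.2 ((LieSubmodule.toSubmodule_le_toSubmodule _ _).1 c)⟩

lemma aux_ne_bot {N : LieSubmodule K L L} (h : LieSubmodule.toSubmodule N ≠ ⊥) : N ≠ ⊥ :=
  fun hb => h (by rw [hb]; exact LieSubmodule.bot_toSubmodule)


lemma aux_lieEquiv_of_basis' {K L M : Type*} [Field K] [LieRing L] [LieAlgebra K L]
    [LieRing M] [LieAlgebra K M] {ι : Type*} [Fintype ι] [DecidableEq ι] [LinearOrder ι]
    (b : Module.Basis ι K L) (c : Module.Basis ι K M)
    (h : ∀ i j, i < j → (b.equiv c (Equiv.refl ι)) ⁅b i, b j⁆ = ⁅c i, c j⁆) :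
    Nonempty (L ≃ₗ⁅K⁆ M) := by
  refine aux_lieEquiv_of_basis b c ?_
  intro i j
  rcases lt_trichotomy i j with hij | rfl | hij
  · exact h i j hij
  · rw [lie_self, lie_self, map_zero]
  · rw [← lie_skew, ← lie_skew (c i) (c j), map_neg, h j i hij]


end Aux


def heisTargetEquiv (K : Type*) [Field K] : (Heis K 1 × AbelianLie K 1) ≃ₗ[K] (Fin 4 → K) where
  toFun x := ![x.1.1.1 0, x.1.1.2 0, x.1.2, x.2 0]
  map_add' x y := by funext i; fin_cases i <;> rfl
  map_smul' t x := by funext i; fin_cases i <;> rfl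
  invFun v := (((fun _ => v 0, fun _ => v 1), v 2), fun _ => v 3)
  left_inv x := by
    refine Prod.ext (Prod.ext (Prod.ext ?_ ?_) rfl) ?_ <;> (funext j; fin_cases j <;> rfl)
  right_inv v := by funext i; fin_cases i <;> rfl

section TargetFacts
variable {K : Type*} [Field K]

noncomputable def heisBasis (K : Type*) [Field K] : Module.Basis (Fin 4) K (Heis K 1 × AbelianLie K 1) :=
  Module.Basis.ofEquivFun (heisTargetEquiv K)

lemma heisBasis_apply (i : Fin 4) :
    heisBasis K i = (heisTargetEquiv K).symm (Pi.single i 1) := by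
  rw [heisBasis, Module.Basis.coe_ofEquivFun]

lemma heis_bracket (a b : Heis K 1) :
    ⁅a, b⁆ = ((0, 0), a.1.1 0 * b.1.2 0 - a.1.2 0 * b.1.1 0) := by
  show Heis.br a b = _
  simp only [Heis.br, Heis.omega, Fin.sum_univ_one]
  rfl

lemma abel_bracket {n : ℕ} (a b : AbelianLie K n) : ⁅a, b⁆ = 0 := rfl

lemma heisBasis_0 : heisBasis K 0 = ((((fun _ => 1), fun _ => 0), 0), fun _ => 0) := by
  apply (heisTargetEquiv K).injective
  rw [heisBasis_apply, LinearEquiv.apply_symm_apply]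
  funext j; fin_cases j <;> simp [heisTargetEquiv, Pi.single_apply] <;> rfl

lemma heisBasis_1 : heisBasis K 1 = ((((fun _ => 0), fun _ => 1), 0), fun _ => 0) := by
  apply (heisTargetEquiv K).injective
  rw [heisBasis_apply, LinearEquiv.apply_symm_apply]
  funext j; fin_cases j <;> simp [heisTargetEquiv, Pi.single_apply] <;> rfl

lemma heisBasis_2 : heisBasis K 2 = ((((fun _ => 0), fun _ => 0), 1), fun _ => 0) := by
  apply (heisTargetEquiv K).injective
  rw [heisBasis_apply, LinearEquiv.apply_symm_apply]
  funext j; fin_cases j <;> simp [heisTargetEquiv, Pi.single_apply] <;> rfl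

lemma heisBasis_3 : heisBasis K 3 = ((((fun _ => 0), fun _ => 0), 0), fun _ => 1) := by
  apply (heisTargetEquiv K).injective
  rw [heisBasis_apply, LinearEquiv.apply_symm_apply]
  funext j; fin_cases j <;> simp [heisTargetEquiv, Pi.single_apply] <;> rfl

lemma heis_prod_bracket (a c : Heis K 1) (b d : AbelianLie K 1) :
    ⁅((a, b) : Heis K 1 × AbelianLie K 1), (c, d)⁆ = (⁅a, c⁆, (0 : AbelianLie K 1)) := rfl

lemma heis_br01 : ⁅heisBasis K 0, heisBasis K 1⁆ = heisBasis K 2 := by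
  rw [heisBasis_0, heisBasis_1, heisBasis_2]
  erw [heis_prod_bracket, heis_bracket]
  exact Prod.ext (Prod.ext rfl (by norm_num)) rfl

lemma heis_br02 : ⁅heisBasis K 0, heisBasis K 2⁆ = 0 := by
  rw [heisBasis_0, heisBasis_2]
  erw [heis_prod_bracket, heis_bracket]
  exact Prod.ext (Prod.ext rfl (by norm_num; rfl)) rfl

lemma heis_br03 : ⁅heisBasis K 0, heisBasis K 3⁆ = 0 := by
  rw [heisBasis_0, heisBasis_3]
  erw [heis_prod_bracket, heis_bracket]
  exact Prod.ext (Prod.ext rfl (by norm_num; rfl)) rfl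

lemma heis_br12 : ⁅heisBasis K 1, heisBasis K 2⁆ = 0 := by
  rw [heisBasis_1, heisBasis_2]
  erw [heis_prod_bracket, heis_bracket]
  exact Prod.ext (Prod.ext rfl (by norm_num; rfl)) rfl

lemma heis_br13 : ⁅heisBasis K 1, heisBasis K 3⁆ = 0 := by
  rw [heisBasis_1, heisBasis_3]
  erw [heis_prod_bracket, heis_bracket]
  exact Prod.ext (Prod.ext rfl (by norm_num; rfl)) rfl

lemma heis_br23 : ⁅heisBasis K 2, heisBasis K 3⁆ = 0 := by
  rw [heisBasis_2, heisBasis_3]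
  erw [heis_prod_bracket, heis_bracket]
  exact Prod.ext (Prod.ext rfl (by norm_num; rfl)) rfl

lemma l43_bracket (x y : L43 K) : ⁅x, y⁆ = L43.br x y := rfl

end TargetFacts


section L43Facts
variable {K : Type*} [Field K]

noncomputable def l43Basis (K : Type*) [Field K] : Module.Basis (Fin 4) K (L43 K) :=
  Pi.basisFun K (Fin 4)

lemma l43Basis_apply (i : Fin 4) : l43Basis K i = (Pi.single i 1 : Fin 4 → K) :=
  Pi.basisFun_apply K (Fin 4) i

lemma l43_br01 : ⁅l43Basis K 0, l43Basis K 1⁆ = l43Basis K 2 := by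
  rw [l43Basis_apply, l43Basis_apply, l43Basis_apply]
  erw [l43_bracket]
  funext k; fin_cases k <;> simp [L43.br, Pi.single_apply]

lemma l43_br02 : ⁅l43Basis K 0, l43Basis K 2⁆ = l43Basis K 3 := by
  rw [l43Basis_apply, l43Basis_apply, l43Basis_apply]
  erw [l43_bracket]
  funext k; fin_cases k <;> simp [L43.br, Pi.single_apply]

lemma l43_br03 : ⁅l43Basis K 0, l43Basis K 3⁆ = 0 := by
  rw [l43Basis_apply, l43Basis_apply]
  erw [l43_bracket]
  funext k; fin_cases k <;> (simp [L43.br, Pi.single_apply]; try rfl)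

lemma l43_br12 : ⁅l43Basis K 1, l43Basis K 2⁆ = 0 := by
  rw [l43Basis_apply, l43Basis_apply]
  erw [l43_bracket]
  funext k; fin_cases k <;> (simp [L43.br, Pi.single_apply]; try rfl)

lemma l43_br13 : ⁅l43Basis K 1, l43Basis K 3⁆ = 0 := by
  rw [l43Basis_apply, l43Basis_apply]
  erw [l43_bracket]
  funext k; fin_cases k <;> (simp [L43.br, Pi.single_apply]; try rfl)

lemma l43_br23 : ⁅l43Basis K 2, l43Basis K 3⁆ = 0 := by
  rw [l43Basis_apply, l43Basis_apply]
  erw [l43_bracket]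
  funext k; fin_cases k <;> (simp [L43.br, Pi.single_apply]; try rfl)

end L43Facts

/-- (de Graaf's classification in dimension 4.) Over a field `K` of
characteristic `≠ 2`, every nilpotent Lie algebra of dimension 4 is isomorphic to one
of: the abelian Lie algebra `K⁴`; the direct product `h(1) × K` of the Heisenberg
algebra with the 1-dimensional abelian Lie algebra; or the Lie algebra `l_{4,3}`. -/
theorem nilpotent_lieAlgebra_dim4_classification {K : Type*} [Field K]
    (hchar : ringChar K ≠ 2) {L : Type*} [LieRing L] [LieAlgebra K L]
    [LieRing.IsNilpotent L] (hdim : Module.finrank K L = 4) :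
    Nonempty (L ≃ₗ⁅K⁆ AbelianLie K 4) ∨
    Nonempty (L ≃ₗ⁅K⁆ (Heis K 1 × AbelianLie K 1)) ∨
    Nonempty (L ≃ₗ⁅K⁆ L43 K) := by
  haveI : FiniteDimensional K L := FiniteDimensional.of_finrank_pos (by rw [hdim]; norm_num)
  classical
  have br1 : ∀ x y : L, ⁅x, y⁆ ∈ LieModule.lowerCentralSeries K L L 1 := fun x y =>
    aux_lie_mem 0 x (LieSubmodule.mem_top y)
  have br2 : ∀ (x : L) {y : L}, y ∈ LieModule.lowerCentralSeries K L L 1 →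
      ⁅x, y⁆ ∈ LieModule.lowerCentralSeries K L L 2 := fun x {y} hy => aux_lie_mem 1 x hy
  have br3 : ∀ (x : L) {y : L}, y ∈ LieModule.lowerCentralSeries K L L 2 →
      ⁅x, y⁆ ∈ LieModule.lowerCentralSeries K L L 3 := fun x {y} hy => aux_lie_mem 2 x hy
  set D1 : Submodule K L := LieSubmodule.toSubmodule (LieModule.lowerCentralSeries K L L 1) with hD1
  set D2 : Submodule K L := LieSubmodule.toSubmodule (LieModule.lowerCentralSeries K L L 2) with hD2
  set D3 : Submodule K L := LieSubmodule.toSubmodule (LieModule.lowerCentralSeries K L L 3) with hD3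
  have hdesc : ∀ k : ℕ, LieSubmodule.toSubmodule (LieModule.lowerCentralSeries K L L k) ≠ ⊥ →
      LieSubmodule.toSubmodule (LieModule.lowerCentralSeries K L L (k+1)) <
        LieSubmodule.toSubmodule (LieModule.lowerCentralSeries K L L k) :=
    fun k h => aux_coe_lt (aux_lcs_lt (aux_ne_bot h))
  have hn1le : Module.finrank K D1 ≤ 4 := hdim ▸ Submodule.finrank_le D1
  have h5 : Module.finrank K D1 = 0 ∨ Module.finrank K D1 = 1 ∨ Module.finrank K D1 = 2 ∨
      Module.finrank K D1 = 3 ∨ Module.finrank K D1 = 4 := by omega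
  rcases h5 with h0 | h1 | h2 | h3 | h4
  · -- abelian case
    have hD1bot : D1 = ⊥ := Submodule.finrank_eq_zero.mp h0
    have habel : ∀ x y : L, ⁅x, y⁆ = 0 := by
      intro x y
      have hm := br1 x y
      rw [← LieSubmodule.mem_toSubmodule, ← hD1, hD1bot, Submodule.mem_bot] at hm
      exact hm
    let b : Module.Basis (Fin 4) K L := Module.finBasisOfFinrankEq K L hdim
    let c : Module.Basis (Fin 4) K (AbelianLie K 4) := Pi.basisFun K (Fin 4)
    refine Or.inl (aux_lieEquiv_of_basis b c ?_)
    intro i j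
    rw [habel, map_zero]
    rfl
  · -- dim 1 : Heisenberg × K
    have hne1 : D1 ≠ ⊥ := fun h => by rw [h, finrank_bot] at h1; omega
    have hD2lt : D2 < D1 := by have h' := hdesc 1 hne1; norm_num at h'; exact h'
    have hD2fr : Module.finrank K D2 = 0 := by
      have hlt := Submodule.finrank_lt_finrank_of_lt hD2lt
      omega
    have hD2bot : D2 = ⊥ := Submodule.finrank_eq_zero.mp hD2fr
    have hcent : ∀ (a : L) {b : L}, b ∈ D1 → ⁅a, b⁆ = 0 := by
      intro a b hb
      have h2 : ⁅a, b⁆ ∈ D2 := br2 a hb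
      rw [hD2bot, Submodule.mem_bot] at h2
      exact h2
    have hcent' : ∀ (a : L) {b : L}, b ∈ D1 → ⁅b, a⁆ = 0 := fun a b hb => by
      rw [← lie_skew, hcent a hb, neg_zero]
    obtain ⟨p, q, hpq⟩ : ∃ p q : L, ⁅p, q⁆ ≠ 0 := by
      by_contra hc
      push_neg at hc
      have hbot : D1 ≤ ⊥ := fun m hm => aux_lcs_succ_le 0 ⊥
        (fun x y _ => by rw [hc x y]; exact Submodule.zero_mem ⊥) m hm
      rw [le_bot_iff.mp hbot, finrank_bot] at h1; omega
    set z : L := ⁅p, q⁆ with hzdef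
    have hzD1 : z ∈ D1 := br1 p q
    have hspan : (K ∙ z) = D1 := by
      apply Submodule.eq_of_le_of_finrank_le
      · exact (Submodule.span_singleton_le_iff_mem _ _).2 hzD1
      · rw [h1, finrank_span_singleton hpq]
    have hbr : ∀ x y : L, ∃ t : K, ⁅x, y⁆ = t • z := by
      intro x y
      have hm : ⁅x, y⁆ ∈ K ∙ z := by rw [hspan]; exact br1 x y
      obtain ⟨a, ha⟩ := Submodule.mem_span_singleton.mp hm
      exact ⟨a, ha.symm⟩
    -- choose w0 outside span {p, q, z}
    have h3ne : Submodule.span K ({p, q, z} : Set L) ≠ ⊤ := by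
      intro htop
      have hcard : Module.finrank K (Submodule.span K ({p, q, z} : Set L)) ≤ 3 := by
        refine (finrank_span_le_card _).trans ?_
        rw [Set.toFinset_insert, Set.toFinset_insert, Set.toFinset_singleton]
        refine (Finset.card_insert_le _ _).trans (Nat.succ_le_succ ?_)
        refine (Finset.card_insert_le _ _).trans (Nat.succ_le_succ ?_)
        simp
      rw [htop, finrank_top, hdim] at hcard; omega
    obtain ⟨w0, hw0⟩ : ∃ w0 : L, w0 ∉ Submodule.span K ({p, q, z} : Set L) := by
      by_contra hc; push_neg at hc; exact h3ne (Submodule.eq_top_iff'.mpr hc)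
    obtain ⟨α, hα⟩ := hbr w0 q
    obtain ⟨β, hβ⟩ := hbr p w0
    set w : L := w0 - α • p - β • q with hwdef
    have hzc : ∀ a : L, ⁅a, z⁆ = 0 := fun a => hcent a hzD1
    have hzc' : ∀ a : L, ⁅z, a⁆ = 0 := fun a => hcent' a hzD1
    have hpw : ⁅p, w⁆ = 0 := by
      rw [hwdef, lie_sub, lie_sub, lie_smul, lie_smul, lie_self, hβ, ← hzdef]
      simp
    have hqw : ⁅q, w⁆ = 0 := by
      have hqp : ⁅q, p⁆ = -z := by rw [hzdef, ← lie_skew]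
      have hqw0 : ⁅q, w0⁆ = -(α • z) := by rw [← lie_skew, hα]
      rw [hwdef, lie_sub, lie_sub, lie_smul, lie_smul, lie_self, hqp, hqw0]
      simp
    have hwspan : w ∉ Submodule.span K ({p, q, z} : Set L) := by
      intro hw
      apply hw0
      have hw0eq : w0 = w + α • p + β • q := by rw [hwdef]; abel
      rw [hw0eq]
      refine Submodule.add_mem _ (Submodule.add_mem _ hw ?_) ?_
      · exact Submodule.smul_mem _ _ (Submodule.subset_span (by simp))
      · exact Submodule.smul_mem _ _ (Submodule.subset_span (by simp))
    have hzmem : z ∈ Submodule.span K ({p, q, z} : Set L) :=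
      Submodule.subset_span (by simp)
    -- linear independence of ![p, q, z, w]
    have li : LinearIndependent K ![p, q, z, w] := by
      rw [Fintype.linearIndependent_iff]
      intro g hg
      have hsum : g 0 • p + g 1 • q + g 2 • z + g 3 • w = 0 := by
        have := hg
        rw [Fin.sum_univ_four] at this
        simpa using this
      have hg0 : g 0 = 0 := by
        have hb := congrArg (fun u => ⁅u, q⁆) hsum
        simp only [add_lie, smul_lie, lie_self, lie_zero, zero_lie, smul_zero] at hb
        rw [← hzdef, hzc' q, show ⁅w, q⁆ = 0 from by rw [← lie_skew, hqw, neg_zero]] at hb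
        simp only [smul_zero, add_zero] at hb
        exact (smul_eq_zero.mp hb).resolve_right hpq
      have hg1 : g 1 = 0 := by
        have hb := congrArg (fun u => ⁅u, p⁆) hsum
        simp only [add_lie, smul_lie, lie_self, lie_zero, zero_lie, smul_zero] at hb
        rw [show ⁅q, p⁆ = -z from by rw [hzdef, ← lie_skew], hzc' p,
          show ⁅w, p⁆ = 0 from by rw [← lie_skew, hpw, neg_zero]] at hb
        simp only [smul_zero, smul_neg, zero_add, add_zero, hg0, zero_smul] at hb
        have : g 1 • z = 0 := by rw [← neg_eq_zero]; simpa using hb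
        exact (smul_eq_zero.mp this).resolve_right hpq
      have hg3 : g 3 = 0 := by
        by_contra hg3
        apply hwspan
        have : w = (g 3)⁻¹ • (-(g 2 • z)) := by
          rw [hg0, hg1] at hsum
          simp only [zero_smul, zero_add] at hsum
          rw [eq_inv_smul_iff₀ hg3]
          exact eq_neg_of_add_eq_zero_right hsum
        rw [this]
        exact Submodule.smul_mem _ _ (Submodule.neg_mem _ (Submodule.smul_mem _ _ hzmem))
      have hg2 : g 2 = 0 := by
        rw [hg0, hg1, hg3] at hsum
        simp only [zero_smul, zero_add, add_zero] at hsum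
        exact (smul_eq_zero.mp hsum).resolve_right hpq
      intro i; fin_cases i <;> assumption
    let b : Module.Basis (Fin 4) K L := basisOfLinearIndependentOfCardEqFinrank li (by simp [hdim])
    have hb : ⇑b = ![p, q, z, w] := coe_basisOfLinearIndependentOfCardEqFinrank li _
    have hb0 : b 0 = p := by rw [hb]; rfl
    have hb1 : b 1 = q := by rw [hb]; rfl
    have hb2 : b 2 = z := by rw [hb]; rfl
    have hb3 : b 3 = w := by rw [hb]; rfl
    refine Or.inr (Or.inl (aux_lieEquiv_of_basis' b (heisBasis K) ?_))
    intro i j hij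
    have hzw : ⁅z, w⁆ = 0 := hzc' w
    have e0 : (⟨0, by norm_num⟩ : Fin 4) = 0 := rfl
    have e1 : (⟨1, by norm_num⟩ : Fin 4) = 1 := rfl
    have e2 : (⟨2, by norm_num⟩ : Fin 4) = 2 := rfl
    have e3 : (⟨3, by norm_num⟩ : Fin 4) = 3 := rfl
    fin_cases i <;> fin_cases j <;> simp only [e0, e1, e2, e3] <;>
      first
      | exact absurd hij (by decide)
      | (rw [hb0, hb1, ← hzdef, ← hb2, Module.Basis.equiv_apply, heis_br01]
         rw [Equiv.refl_apply])
      | (rw [hb0, hb2, hzc p, map_zero, heis_br02])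
      | (rw [hb0, hb3, hpw, map_zero, heis_br03])
      | (rw [hb1, hb2, hzc q, map_zero, heis_br12])
      | (rw [hb1, hb3, hqw, map_zero, heis_br13])
      | (rw [hb2, hb3, hzw, map_zero, heis_br23])
  · -- dim 2 : l_{4,3}
    have hne1 : D1 ≠ ⊥ := fun h => by rw [h, finrank_bot] at h2; omega
    have hD2lt : D2 < D1 := by have h' := hdesc 1 hne1; norm_num at h'; exact h'
    have hD2frlt : Module.finrank K D2 < 2 := by
      have := Submodule.finrank_lt_finrank_of_lt hD2lt; omega
    -- D2 is nonzero
    have hD2ne : D2 ≠ ⊥ := by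
      intro hbot
      have hcent : ∀ (a : L) {b : L}, b ∈ D1 → ⁅a, b⁆ = 0 := by
        intro a b hb
        have hx : ⁅a, b⁆ ∈ D2 := br2 a hb
        rw [hbot, Submodule.mem_bot] at hx; exact hx
      have hcent' : ∀ (a : L) {b : L}, b ∈ D1 → ⁅b, a⁆ = 0 := fun a b hb => by
        rw [← lie_skew, hcent a hb, neg_zero]
      obtain ⟨x0, y0, hxy⟩ : ∃ p q : L, ⁅p, q⁆ ≠ 0 := by
        by_contra hc
        push_neg at hc
        have hbot' : D1 ≤ ⊥ := fun m hm => aux_lcs_succ_le 0 ⊥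
          (fun x y _ => by rw [hc x y]; exact Submodule.zero_mem ⊥) m hm
        rw [le_bot_iff.mp hbot', finrank_bot] at h2; omega
      have hx0 : x0 ∉ D1 := fun hx => hxy (hcent' y0 hx)
      have hy0 : y0 ∉ D1 ⊔ (K ∙ x0) := by
        intro hy
        rcases Submodule.mem_sup.mp hy with ⟨d, hd, u, hu, rfl⟩
        obtain ⟨t, rfl⟩ := Submodule.mem_span_singleton.mp hu
        apply hxy
        rw [lie_add, lie_smul, lie_self, smul_zero, add_zero, hcent x0 hd]
      have hS : (D1 ⊔ (K ∙ x0)) ⊔ (K ∙ y0) = ⊤ := by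
        apply Submodule.eq_top_of_finrank_eq
        have l1 := Submodule.finrank_lt_finrank_of_lt (aux_lt_sup_span hx0)
        have l2 := Submodule.finrank_lt_finrank_of_lt (aux_lt_sup_span hy0)
        have l3 : Module.finrank K ↥((D1 ⊔ (K ∙ x0)) ⊔ (K ∙ y0)) ≤ 4 :=
          hdim ▸ Submodule.finrank_le _
        rw [hdim]; omega
      have hdec : ∀ v : L, ∃ a b : K, ∃ d ∈ D1, v = d + a • x0 + b • y0 := by
        intro v
        have hv : v ∈ (D1 ⊔ (K ∙ x0)) ⊔ (K ∙ y0) := hS.symm ▸ Submodule.mem_top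
        rcases Submodule.mem_sup.mp hv with ⟨v', hv', uy, huy, rfl⟩
        rcases Submodule.mem_sup.mp hv' with ⟨d, hd, ux, hux, rfl⟩
        obtain ⟨a, rfl⟩ := Submodule.mem_span_singleton.mp hux
        obtain ⟨b, rfl⟩ := Submodule.mem_span_singleton.mp huy
        exact ⟨a, b, d, hd, rfl⟩
      have hall : ∀ x y : L, ⁅x, y⁆ ∈ (K ∙ ⁅x0, y0⁆) := by
        intro x y
        obtain ⟨a, b, d, hd, rfl⟩ := hdec x
        obtain ⟨a', b', e, he, rfl⟩ := hdec y
        have hexp : ⁅d + a • x0 + b • y0, e + a' • x0 + b' • y0⁆ =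
            (a * b') • ⁅x0, y0⁆ + (b * a') • ⁅y0, x0⁆ := by
          rw [add_lie, add_lie, smul_lie, smul_lie,
            hcent' (e + a' • x0 + b' • y0) hd]
          rw [lie_add, lie_add, lie_add, lie_add, hcent x0 he, hcent y0 he,
            lie_smul, lie_smul, lie_smul, lie_smul, lie_self, lie_self]
          simp [smul_smul]
        rw [hexp]
        refine Submodule.add_mem _ (Submodule.smul_mem _ _ (Submodule.mem_span_singleton_self _)) ?_
        have hyx : ⁅y0, x0⁆ = -⁅x0, y0⁆ := by rw [← lie_skew]
        rw [hyx, smul_neg]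
        exact Submodule.neg_mem _ (Submodule.smul_mem _ _ (Submodule.mem_span_singleton_self _))
      have hle : D1 ≤ K ∙ ⁅x0, y0⁆ := fun m hm =>
        aux_lcs_succ_le 0 _ (fun x y _ => hall x y) m hm
      have hfr : Module.finrank K ↥(K ∙ ⁅x0, y0⁆) = 1 := finrank_span_singleton hxy
      have := Submodule.finrank_mono hle
      rw [h2, hfr] at this; omega
    have hD2fr : Module.finrank K D2 = 1 := by
      have h0' : Module.finrank K D2 ≠ 0 := fun h =>
        hD2ne (Submodule.finrank_eq_zero.mp h)
      omega
    have hD3bot : D3 = ⊥ := by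
      have h' : D3 < D2 := hdesc 2 hD2ne
      have := Submodule.finrank_lt_finrank_of_lt h'
      exact Submodule.finrank_eq_zero.mp (by omega)
    have hcent2 : ∀ (a : L) {b : L}, b ∈ D2 → ⁅a, b⁆ = 0 := by
      intro a b hb
      have hx : ⁅a, b⁆ ∈ D3 := br3 a hb
      rw [hD3bot, Submodule.mem_bot] at hx; exact hx
    have hcent2' : ∀ (a : L) {b : L}, b ∈ D2 → ⁅b, a⁆ = 0 := fun a b hb => by
      rw [← lie_skew, hcent2 a hb, neg_zero]
    -- pick v4 spanning D2
    obtain ⟨v4, hv4D2, hv4ne⟩ : ∃ v4 ∈ D2, v4 ≠ (0 : L) := by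
      by_contra hc
      push_neg at hc
      exact hD2ne ((Submodule.eq_bot_iff _).mpr hc)
    have hspan4 : (K ∙ v4) = D2 := by
      apply Submodule.eq_of_le_of_finrank_le
      · exact (Submodule.span_singleton_le_iff_mem _ _).2 hv4D2
      · rw [hD2fr, finrank_span_singleton hv4ne]
    -- pick v3' in D1 \ D2
    obtain ⟨v3', hv3'D1, hv3'D2⟩ := SetLike.exists_of_lt hD2lt
    have hlt' := Submodule.finrank_lt_finrank_of_lt (aux_lt_sup_span hv3'D2)
    have hD1span : D2 ⊔ (K ∙ v3') = D1 := by
      apply Submodule.eq_of_le_of_finrank_le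
      · exact sup_le hD2lt.le ((Submodule.span_singleton_le_iff_mem _ _).2 hv3'D1)
      · have : Module.finrank K ↥(D2 ⊔ (K ∙ v3')) ≤ Module.finrank K ↥D1 :=
          Submodule.finrank_mono (sup_le hD2lt.le
            ((Submodule.span_singleton_le_iff_mem _ _).2 hv3'D1))
        omega
    have hdecompD1 : ∀ n ∈ D1, ∃ c : K, ∃ m ∈ D2, n = c • v3' + m := by
      intro n hn
      rw [← hD1span] at hn
      rcases Submodule.mem_sup.mp hn with ⟨m, hm, u, hu, rfl⟩
      obtain ⟨c, rfl⟩ := Submodule.mem_span_singleton.mp hu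
      exact ⟨c, m, hm, by abel⟩
    -- find v1 with [v1, v3'] = v4
    obtain ⟨v1, hv1⟩ : ∃ v1 : L, ⁅v1, v3'⁆ = v4 := by
      let φ : L →ₗ[K] L :=
        { toFun := fun x => ⁅x, v3'⁆
          map_add' := fun a b => add_lie a b v3'
          map_smul' := fun t a => smul_lie t a v3' }
      have hrange : D2 ≤ LinearMap.range φ := by
        intro m hm
        refine aux_lcs_succ_le 1 (LinearMap.range φ) ?_ m hm
        intro x y hy
        obtain ⟨c, m', hm', rfl⟩ := hdecompD1 y hy
        refine ⟨c • x, ?_⟩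
        have hφ : φ (c • x) = c • ⁅x, v3'⁆ := by
          rw [map_smul]; rfl
        rw [hφ, lie_add, lie_smul, hcent2 x hm', add_zero]
      obtain ⟨v1, hv1⟩ := hrange hv4D2
      exact ⟨v1, hv1⟩
    -- find x, y with [x,y] ∉ D2
    obtain ⟨x, y, hxyD2⟩ : ∃ x y : L, ⁅x, y⁆ ∉ D2 := by
      by_contra hc
      push_neg at hc
      have hled : D1 ≤ D2 := fun m hm => aux_lcs_succ_le 0 D2 (fun a b _ => hc a b) m hm
      exact hD2lt.not_ge hled
    have hv1D1 : v1 ∉ D1 := by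
      intro hv1D1
      obtain ⟨c, m, hm, heq⟩ := hdecompD1 v1 hv1D1
      apply hv4ne
      rw [← hv1, heq, add_lie, smul_lie, lie_self, smul_zero, zero_add, hcent2' v3' hm]
    have hxD1 : x ∉ D1 := by
      intro hx
      apply hxyD2
      rw [← lie_skew]
      exact Submodule.neg_mem _ (br2 y hx)
    have hyD1x : y ∉ D1 ⊔ (K ∙ x) := by
      intro hy
      rcases Submodule.mem_sup.mp hy with ⟨d, hd, u, hu, rfl⟩
      obtain ⟨t, rfl⟩ := Submodule.mem_span_singleton.mp hu
      apply hxyD2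
      rw [lie_add, lie_smul, lie_self, smul_zero, add_zero]
      exact br2 x hd
    have hT : (D1 ⊔ (K ∙ x)) ⊔ (K ∙ y) = ⊤ := by
      apply Submodule.eq_top_of_finrank_eq
      have l1 := Submodule.finrank_lt_finrank_of_lt (aux_lt_sup_span hxD1)
      have l2 := Submodule.finrank_lt_finrank_of_lt (aux_lt_sup_span hyD1x)
      have l3 : Module.finrank K ↥((D1 ⊔ (K ∙ x)) ⊔ (K ∙ y)) ≤ 4 :=
        hdim ▸ Submodule.finrank_le _
      rw [hdim]; omega
    obtain ⟨d, hd, s, t, hv1dec⟩ : ∃ d ∈ D1, ∃ s t : K, v1 = d + s • x + t • y := by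
      have hv : v1 ∈ (D1 ⊔ (K ∙ x)) ⊔ (K ∙ y) := hT.symm ▸ Submodule.mem_top
      rcases Submodule.mem_sup.mp hv with ⟨v', hv', uy, huy, hveq⟩
      rcases Submodule.mem_sup.mp hv' with ⟨d, hd, ux, hux, hveq'⟩
      obtain ⟨s, rfl⟩ := Submodule.mem_span_singleton.mp hux
      obtain ⟨t, rfl⟩ := Submodule.mem_span_singleton.mp huy
      exact ⟨d, hd, s, t, by rw [← hveq, ← hveq']⟩
    -- find u with [v1, u] ∉ D2
    obtain ⟨u, huD2⟩ : ∃ u : L, ⁅v1, u⁆ ∉ D2 := by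
      by_contra hc
      push_neg at hc
      have hdy : ⁅d, y⁆ ∈ D2 := by
        rw [← lie_skew]; exact Submodule.neg_mem _ (br2 y hd)
      have hdx : ⁅d, x⁆ ∈ D2 := by
        rw [← lie_skew]; exact Submodule.neg_mem _ (br2 x hd)
      have hs0 : s = 0 := by
        by_contra hs
        have hexp : ⁅v1, y⁆ = ⁅d, y⁆ + s • ⁅x, y⁆ := by
          rw [hv1dec, add_lie, add_lie, smul_lie, smul_lie, lie_self, smul_zero, add_zero]
        have hmem : s • ⁅x, y⁆ ∈ D2 := by
          have : s • ⁅x, y⁆ = ⁅v1, y⁆ - ⁅d, y⁆ := by rw [hexp]; abel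
          rw [this]
          exact Submodule.sub_mem _ (hc y) hdy
        apply hxyD2
        have := Submodule.smul_mem D2 s⁻¹ hmem
        rwa [smul_smul, inv_mul_cancel₀ hs, one_smul] at this
      have ht0 : t = 0 := by
        by_contra ht
        have hexp : ⁅v1, x⁆ = ⁅d, x⁆ + t • ⁅y, x⁆ := by
          rw [hv1dec, add_lie, add_lie, smul_lie, smul_lie, lie_self, smul_zero, add_zero]
        have hmem : t • ⁅y, x⁆ ∈ D2 := by
          have : t • ⁅y, x⁆ = ⁅v1, x⁆ - ⁅d, x⁆ := by rw [hexp]; abel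
          rw [this]
          exact Submodule.sub_mem _ (hc x) hdx
        apply hxyD2
        rw [← lie_skew]
        refine Submodule.neg_mem _ ?_
        have := Submodule.smul_mem D2 t⁻¹ hmem
        rwa [smul_smul, inv_mul_cancel₀ ht, one_smul] at this
      apply hv1D1
      rw [hv1dec, hs0, ht0, zero_smul, zero_smul, add_zero, add_zero]
      exact hd
    obtain ⟨lam, m, hm, hlameq⟩ := hdecompD1 ⁅v1, u⁆ (br1 v1 u)
    have hlam : lam ≠ 0 := by
      rintro rfl
      apply huD2
      rw [hlameq, zero_smul, zero_add]
      exact hm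
    obtain ⟨v2', hv2'def⟩ : ∃ w : L, w = lam⁻¹ • u := ⟨_, rfl⟩
    obtain ⟨v3, hv3def⟩ : ∃ w : L, w = ⁅v1, v2'⁆ := ⟨_, rfl⟩
    have hv3eq : v3 = v3' + lam⁻¹ • m := by
      rw [hv3def, hv2'def, lie_smul, hlameq, smul_add, smul_smul,
        inv_mul_cancel₀ hlam, one_smul]
    have hv3D1 : v3 ∈ D1 := by
      rw [hv3eq]
      exact Submodule.add_mem _ hv3'D1 (Submodule.smul_mem _ _ (hD2lt.le hm))
    have hv3D2 : v3 ∉ D2 := by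
      rw [hv3eq]
      intro hmem
      apply hv3'D2
      have hsub := Submodule.sub_mem _ hmem (Submodule.smul_mem _ lam⁻¹ hm)
      simpa using hsub
    have h13 : ⁅v1, v3⁆ = v4 := by
      rw [hv3eq, lie_add, hv1, lie_smul, hcent2 v1 hm, smul_zero, add_zero]
    obtain ⟨e', he'⟩ := Submodule.mem_span_singleton.mp
      (show ⁅v2', v3⁆ ∈ K ∙ v4 by rw [hspan4]; exact br2 v2' hv3D1)
    obtain ⟨v2, hv2def⟩ : ∃ w : L, w = v2' - e' • v1 := ⟨_, rfl⟩
    have h12 : ⁅v1, v2⁆ = v3 := by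
      have aux0 : ⁅v1, e' • v1⁆ = 0 := by rw [lie_smul, lie_self, smul_zero]
      rw [hv2def, lie_sub, aux0, sub_zero, ← hv3def]
    have h23 : ⁅v2, v3⁆ = 0 := by
      rw [hv2def, sub_lie, smul_lie, h13, ← he', sub_self]
    have h14 : ⁅v1, v4⁆ = 0 := hcent2 v1 hv4D2
    have h24 : ⁅v2, v4⁆ = 0 := hcent2 v2 hv4D2
    have h34 : ⁅v3, v4⁆ = 0 := hcent2 v3 hv4D2
    have hv2D1 : v2 ∉ D1 := by
      intro hv2D1
      apply hv3D2
      rw [← h12]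
      exact br2 v1 hv2D1
    -- linear independence of v1 v2 v3 v4
    have li : LinearIndependent K ![v1, v2, v3, v4] := by
      rw [Fintype.linearIndependent_iff]
      intro g hg
      have hsum : g 0 • v1 + g 1 • v2 + g 2 • v3 + g 3 • v4 = 0 := by
        have := hg
        rw [Fin.sum_univ_four] at this
        simpa using this
      have hg0 : g 0 = 0 := by
        have hb := congrArg (fun w => ⁅w, v3⁆) hsum
        simp only [add_lie, smul_lie, lie_self, zero_lie] at hb
        rw [h13, show ⁅v2, v3⁆ = 0 from h23,
          show ⁅v4, v3⁆ = 0 from by rw [← lie_skew, h34, neg_zero]] at hb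
        simp only [smul_zero, add_zero] at hb
        exact (smul_eq_zero.mp hb).resolve_right hv4ne
      have hg1 : g 1 = 0 := by
        by_contra hg1
        apply hv2D1
        have : v2 = (g 1)⁻¹ • (-(g 2 • v3 + g 3 • v4)) := by
          rw [hg0] at hsum
          simp only [zero_smul, zero_add] at hsum
          rw [eq_inv_smul_iff₀ hg1]
          rw [add_assoc] at hsum
          exact eq_neg_of_add_eq_zero_left hsum
        rw [this]
        refine Submodule.smul_mem _ _ (Submodule.neg_mem _ (Submodule.add_mem _ ?_ ?_))
        · exact Submodule.smul_mem _ _ hv3D1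
        · exact Submodule.smul_mem _ _ (hD2lt.le hv4D2)
      have hg2 : g 2 = 0 := by
        by_contra hg2
        apply hv3D2
        have : v3 = (g 2)⁻¹ • (-(g 3 • v4)) := by
          rw [hg0, hg1] at hsum
          simp only [zero_smul, zero_add] at hsum
          rw [eq_inv_smul_iff₀ hg2]
          exact eq_neg_of_add_eq_zero_left hsum
        rw [this]
        exact Submodule.smul_mem _ _ (Submodule.neg_mem _ (Submodule.smul_mem _ _ hv4D2))
      have hg3 : g 3 = 0 := by
        rw [hg0, hg1, hg2] at hsum
        simp only [zero_smul, zero_add] at hsum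
        exact (smul_eq_zero.mp hsum).resolve_right hv4ne
      intro i; fin_cases i <;> assumption
    let b : Module.Basis (Fin 4) K L := basisOfLinearIndependentOfCardEqFinrank li (by simp [hdim])
    have hb : ⇑b = ![v1, v2, v3, v4] := coe_basisOfLinearIndependentOfCardEqFinrank li _
    have hb0 : b 0 = v1 := by rw [hb]; rfl
    have hb1 : b 1 = v2 := by rw [hb]; rfl
    have hb2 : b 2 = v3 := by rw [hb]; rfl
    have hb3 : b 3 = v4 := by rw [hb]; rfl
    refine Or.inr (Or.inr (aux_lieEquiv_of_basis' b (l43Basis K) ?_))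
    intro i j hij
    have e0 : (⟨0, by norm_num⟩ : Fin 4) = 0 := rfl
    have e1 : (⟨1, by norm_num⟩ : Fin 4) = 1 := rfl
    have e2 : (⟨2, by norm_num⟩ : Fin 4) = 2 := rfl
    have e3 : (⟨3, by norm_num⟩ : Fin 4) = 3 := rfl
    fin_cases i <;> fin_cases j <;> simp only [e0, e1, e2, e3] <;>
      first
      | exact absurd hij (by decide)
      | (rw [hb0, hb1, h12, ← hb2, Module.Basis.equiv_apply, l43_br01]
         rw [Equiv.refl_apply])
      | (rw [hb0, hb2, h13, ← hb3, Module.Basis.equiv_apply, l43_br02]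
         rw [Equiv.refl_apply])
      | (rw [hb0, hb3, h14, map_zero, l43_br03])
      | (rw [hb1, hb2, h23, map_zero, l43_br12])
      | (rw [hb1, hb3, h24, map_zero, l43_br13])
      | (rw [hb2, hb3, h34, map_zero, l43_br23])
  · -- dim 3 : contradiction
    exfalso
    have hx0e : ∀ (a : L) {b : L}, b ∈ D1 → ⁅a, b⁆ ∈ D2 := fun a b hb => br2 a hb
    have hskew : ∀ (a : L) {b : L}, b ∈ D1 → ⁅b, a⁆ ∈ D2 := fun a b hb => by
      rw [← lie_skew]; exact D2.neg_mem (hx0e a hb)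
    have hne : D1 ≠ ⊤ := fun h => by rw [h, finrank_top] at h3; omega
    obtain ⟨x0, hx0⟩ : ∃ x0 : L, x0 ∉ D1 := by
      by_contra hc; push_neg at hc; exact hne (Submodule.eq_top_iff'.mpr hc)
    have hsup : D1 ⊔ (K ∙ x0) = ⊤ := by
      apply Submodule.eq_top_of_finrank_eq
      have hlt := Submodule.finrank_lt_finrank_of_lt (aux_lt_sup_span hx0)
      have hle : Module.finrank K ↥(D1 ⊔ (K ∙ x0)) ≤ 4 := hdim ▸ Submodule.finrank_le _
      rw [hdim]; omega
    have hdecomp : ∀ y : L, ∃ t : K, ∃ d ∈ D1, y = d + t • x0 := by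
      intro y
      have hy : y ∈ D1 ⊔ (K ∙ x0) := hsup.symm ▸ Submodule.mem_top
      rcases Submodule.mem_sup.mp hy with ⟨d, hd, z, hz, rfl⟩
      obtain ⟨t, rfl⟩ := Submodule.mem_span_singleton.mp hz
      exact ⟨t, d, hd, rfl⟩
    have hall : ∀ x y : L, ⁅x, y⁆ ∈ D2 := by
      intro x y
      obtain ⟨s, d, hd, rfl⟩ := hdecomp x
      obtain ⟨t, e, he, rfl⟩ := hdecomp y
      have hexp : ⁅d + s • x0, e + t • x0⁆ =
          (⁅d, e + t • x0⁆ + s • ⁅x0, e⁆) + (s * t) • ⁅x0, x0⁆ := by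
        simp only [add_lie, lie_add, smul_lie, lie_smul, smul_add, smul_smul, mul_comm]
        abel
      rw [hexp]
      refine D2.add_mem (D2.add_mem ?_ (D2.smul_mem s (hx0e x0 he))) ?_
      · exact hskew _ hd
      · rw [lie_self]; exact (D2.smul_mem _ D2.zero_mem : (s*t) • (0:L) ∈ D2)
    have hle12 : D1 ≤ D2 := by
      intro m hm
      exact aux_lcs_succ_le 0 D2 (fun x y _ => hall x y) m hm
    have hne1 : D1 ≠ ⊥ := fun h => by rw [h, finrank_bot] at h3; omega
    exact (hdesc 1 hne1).not_ge hle12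
  · -- dim 4 : contradiction
    exfalso
    have htopne : (⊤ : Submodule K L) ≠ ⊥ := by
      intro h
      have h4' : Module.finrank K L = 0 := by
        rw [← finrank_top K L, h, finrank_bot]
      omega
    have hD1top : D1 = ⊤ := Submodule.eq_top_of_finrank_eq (by rw [h4, hdim])
    have h01 := hdesc 0 (by rw [LieModule.lowerCentralSeries_zero]; rw [LieSubmodule.top_toSubmodule]; exact htopne)
    rw [LieModule.lowerCentralSeries_zero] at h01
    rw [LieSubmodule.top_toSubmodule] at h01
    rw [← hD1] at h01
    exact absurd hD1top (ne_of_lt h01)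
end
end

section
/- Let α ∈ ℝ and β > 0, and define the linear operators on the Schwartz space S(ℝ): a f = (1/√(2β))·(f' + β·x·f + iαβ·f), b f = (1/√(2β))·(−f' + β·x·f + iαβ·f), a* f = (1/√(2β))·(−f' + β·x·f − iαβ·f), b* f = (1/√(2β))·(f' + β·x·f − iαβ·f). Then these operators map S(ℝ) into itself and for every f ∈ S(ℝ): a(b f) − b(a f) = f; b*(a* f) − a*(b* f) = f; a(a* f) − a*(a f) = f; b*(b f) − b(b* f) = f; a(b* f) − b*(a f) = 0; and b(a* f) − a*(b f) = 0. In particular the operators a, b, b*, a*, id satisfy exactly the same commutation relations as the generators v_1, v_2, v_3, v_4, v of the Lie algebra a_sh. -/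
noncomputable section

open SchwartzMap

/-- Multiplication by the variable `x`, as an operator on the Schwartz space
`𝓢(ℝ, ℂ)`: it sends `f` to the function `x ↦ f x * x`. -/
def mulXOp : 𝓢(ℝ, ℂ) →L[ℝ] 𝓢(ℝ, ℂ) :=
  SchwartzMap.bilinLeftCLM (ContinuousLinearMap.mul ℝ ℂ)
    Complex.ofRealCLM.hasTemperateGrowth

@[simp] lemma mulXOp_apply (f : 𝓢(ℝ, ℂ)) (x : ℝ) : mulXOp f x = f x * x := rfl

/-- The annihilation operator `c`, with `(c f) x = (x * f x + deriv f x)/√2`. -/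
def cOp (f : 𝓢(ℝ, ℂ)) : 𝓢(ℝ, ℂ) :=
  ((Real.sqrt 2 : ℂ))⁻¹ • (mulXOp f + SchwartzMap.derivCLM ℂ ℂ f)

/-- The creation operator `c†`, with `(c† f) x = (x * f x - deriv f x)/√2`. -/
def cdOp (f : 𝓢(ℝ, ℂ)) : 𝓢(ℝ, ℂ) :=
  ((Real.sqrt 2 : ℂ))⁻¹ • (mulXOp f - SchwartzMap.derivCLM ℂ ℂ f)

lemma cOp_apply (f : 𝓢(ℝ, ℂ)) (x : ℝ) :
    cOp f x = ((x : ℂ) * f x + deriv f x) / (Real.sqrt 2 : ℂ) := by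
  rw [cOp, SchwartzMap.smul_apply, SchwartzMap.add_apply, mulXOp_apply,
    SchwartzMap.derivCLM_apply, smul_eq_mul, div_eq_inv_mul]
  ring

lemma cdOp_apply (f : 𝓢(ℝ, ℂ)) (x : ℝ) :
    cdOp f x = ((x : ℂ) * f x - deriv f x) / (Real.sqrt 2 : ℂ) := by
  rw [cdOp, SchwartzMap.smul_apply, SchwartzMap.sub_apply, mulXOp_apply,
    SchwartzMap.derivCLM_apply, smul_eq_mul, div_eq_inv_mul]
  ring

/-- The Bender–Jones operator `a f = (1/√(2β)) (f' + β·x·f + iαβ·f)`. -/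
def aBJ (α β : ℝ) (f : 𝓢(ℝ, ℂ)) : 𝓢(ℝ, ℂ) :=
  ((Real.sqrt (2 * β) : ℂ))⁻¹ •
    (SchwartzMap.derivCLM ℂ ℂ f + (β : ℂ) • mulXOp f + (Complex.I * α * β) • f)

/-- The Bender–Jones operator `b f = (1/√(2β)) (-f' + β·x·f + iαβ·f)`. -/
def bBJ (α β : ℝ) (f : 𝓢(ℝ, ℂ)) : 𝓢(ℝ, ℂ) :=
  ((Real.sqrt (2 * β) : ℂ))⁻¹ •
    (-SchwartzMap.derivCLM ℂ ℂ f + (β : ℂ) • mulXOp f + (Complex.I * α * β) • f)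

/-- The Bender–Jones operator `a† f = (1/√(2β)) (-f' + β·x·f - iαβ·f)`. -/
def aBJStar (α β : ℝ) (f : 𝓢(ℝ, ℂ)) : 𝓢(ℝ, ℂ) :=
  ((Real.sqrt (2 * β) : ℂ))⁻¹ •
    (-SchwartzMap.derivCLM ℂ ℂ f + (β : ℂ) • mulXOp f - (Complex.I * α * β) • f)

/-- The Bender–Jones operator `b† f = (1/√(2β)) (f' + β·x·f - iαβ·f)`. -/
def bBJStar (α β : ℝ) (f : 𝓢(ℝ, ℂ)) : 𝓢(ℝ, ℂ) :=
  ((Real.sqrt (2 * β) : ℂ))⁻¹ •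
    (SchwartzMap.derivCLM ℂ ℂ f + (β : ℂ) • mulXOp f - (Complex.I * α * β) • f)


section Aux

/-- `mulXOp` commutes with complex scalars (pointwise obvious). -/
lemma mulXOp_smul (c : ℂ) (f : 𝓢(ℝ, ℂ)) : mulXOp (c • f) = c • mulXOp f := by
  ext x
  simp [mul_assoc]

/-- The canonical commutation relation `[D, X] = 1` on Schwartz space. -/
lemma deriv_mulXOp (f : 𝓢(ℝ, ℂ)) :
    SchwartzMap.derivCLM ℂ ℂ (mulXOp f) = f + mulXOp (SchwartzMap.derivCLM ℂ ℂ f) := by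
  ext x
  simp only [SchwartzMap.derivCLM_apply, SchwartzMap.add_apply, mulXOp_apply]
  have h : ⇑(mulXOp f) = fun y : ℝ => f y * (y : ℂ) := rfl
  rw [h]
  have hx : HasDerivAt (fun y : ℝ => (y : ℂ)) 1 x := by
    simpa using (hasDerivAt_id x).ofReal_comp
  have hf : HasDerivAt (fun y : ℝ => f y) (deriv f x) x :=
    (f.differentiableAt).hasDerivAt
  have := hf.mul hx
  rw [HasDerivAt.deriv (f := fun y : ℝ => f y * (y : ℂ)) this]
  ring

/-- General operator of the shape `s • (ε • f' + b • x·f + c • f)`. -/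
def genOp (s ε b c : ℂ) (f : 𝓢(ℝ, ℂ)) : 𝓢(ℝ, ℂ) :=
  s • (ε • SchwartzMap.derivCLM ℂ ℂ f + b • mulXOp f + c • f)

lemma genOp_comm (s b c₁ c₂ ε₁ ε₂ : ℂ) (f : 𝓢(ℝ, ℂ)) :
    genOp s ε₁ b c₁ (genOp s ε₂ b c₂ f) - genOp s ε₂ b c₂ (genOp s ε₁ b c₁ f)
      = ((ε₁ - ε₂) * b * (s * s)) • f := by
  simp only [genOp, map_add, map_smul, mulXOp_smul, smul_add, smul_smul,
    deriv_mulXOp]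
  module

lemma aBJ_eq (α β : ℝ) (f : 𝓢(ℝ, ℂ)) :
    aBJ α β f = genOp ((Real.sqrt (2 * β) : ℂ))⁻¹ 1 (β : ℂ) (Complex.I * α * β) f := by
  simp [aBJ, genOp]

lemma bBJ_eq (α β : ℝ) (f : 𝓢(ℝ, ℂ)) :
    bBJ α β f = genOp ((Real.sqrt (2 * β) : ℂ))⁻¹ (-1) (β : ℂ) (Complex.I * α * β) f := by
  simp [bBJ, genOp]

lemma aBJStar_eq (α β : ℝ) (f : 𝓢(ℝ, ℂ)) :
    aBJStar α β f
      = genOp ((Real.sqrt (2 * β) : ℂ))⁻¹ (-1) (β : ℂ) (-(Complex.I * α * β)) f := by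
  simp [aBJStar, genOp, sub_eq_add_neg]

lemma bBJStar_eq (α β : ℝ) (f : 𝓢(ℝ, ℂ)) :
    bBJStar α β f
      = genOp ((Real.sqrt (2 * β) : ℂ))⁻¹ 1 (β : ℂ) (-(Complex.I * α * β)) f := by
  simp [bBJStar, genOp, sub_eq_add_neg]

end Aux

/-- For `α ∈ ℝ` and `β > 0`, the operators `a`, `b`, `a†`, `b†`
of the (one-dimensional) Bender–Jones model map the Schwartz space into itself and
satisfy the same commutation relations as the generators `v₁, v₂, v₃, v₄, v` of the
Lie algebra `a_sh`: `[a,b] = [b†,a†] = [a,a†] = [b†,b] = 1`, `[a,b†] = [b,a†] = 0`. -/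
theorem bender_jones_commutation_relations (α β : ℝ) (hβ : 0 < β) :
    (∀ f : 𝓢(ℝ, ℂ), aBJ α β (bBJ α β f) - bBJ α β (aBJ α β f) = f) ∧
    (∀ f : 𝓢(ℝ, ℂ), bBJStar α β (aBJStar α β f) - aBJStar α β (bBJStar α β f) = f) ∧
    (∀ f : 𝓢(ℝ, ℂ), aBJ α β (aBJStar α β f) - aBJStar α β (aBJ α β f) = f) ∧
    (∀ f : 𝓢(ℝ, ℂ), bBJStar α β (bBJ α β f) - bBJ α β (bBJStar α β f) = f) ∧
    (∀ f : 𝓢(ℝ, ℂ), aBJ α β (bBJStar α β f) - bBJStar α β (aBJ α β f) = 0) ∧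
    (∀ f : 𝓢(ℝ, ℂ), bBJ α β (aBJStar α β f) - aBJStar α β (bBJ α β f) = 0) := by
  set s : ℂ := ((Real.sqrt (2 * β) : ℂ))⁻¹ with hs_def
  have h2β : (0:ℝ) < 2 * β := by linarith
  have hsq : (Real.sqrt (2 * β) : ℂ) * (Real.sqrt (2 * β) : ℂ) = ((2 * β : ℝ) : ℂ) := by
    norm_cast
    exact Real.mul_self_sqrt h2β.le
  have hne : ((2 * β : ℝ) : ℂ) ≠ 0 := by
    exact_mod_cast h2β.ne'
  have hss : ((1 : ℂ) - (-1)) * (β : ℂ) * (s * s) = 1 := by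
    rw [hs_def, ← mul_inv, hsq]
    have : ((1 : ℂ) - (-1)) * (β : ℂ) = ((2 * β : ℝ) : ℂ) := by push_cast; ring
    rw [this, mul_inv_cancel₀ hne]
  refine ⟨fun f => ?_, fun f => ?_, fun f => ?_, fun f => ?_, fun f => ?_, fun f => ?_⟩ <;>
    simp only [aBJ_eq, bBJ_eq, aBJStar_eq, bBJStar_eq, ← hs_def, genOp_comm]
  · rw [hss, one_smul]
  · rw [hss, one_smul]
  · rw [hss, one_smul]
  · rw [hss, one_smul]
  · norm_num
  · norm_num
end
end

section
/- Let θ ∈ ℝ and define on the Schwartz space S(ℝ) the operators a = cos(θ)·c + i·sin(θ)·c†, b = cos(θ)·c† + i·sin(θ)·c, a* = cos(θ)·c† − i·sin(θ)·c, b* = cos(θ)·c − i·sin(θ)·c†. Then for every f ∈ S(ℝ): a(b f) − b(a f) = f; b*(a* f) − a*(b* f) = f; a(a* f) − a*(a f) = cos(2θ)·f; b*(b f) − b(b* f) = cos(2θ)·f; a(b* f) − b*(a f) = −i·sin(2θ)·f; and a*(b f) − b(a* f) = −i·sin(2θ)·f. (These are the commutation relations of the Swanson model.) -/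
noncomputable section

open SchwartzMap

/-- The Swanson-model operator `a = cos θ · c + i sin θ · c†`. -/
def aSw (θ : ℝ) (f : 𝓢(ℝ, ℂ)) : 𝓢(ℝ, ℂ) :=
  (Real.cos θ : ℂ) • cOp f + (Complex.I * (Real.sin θ : ℂ)) • cdOp f

/-- The Swanson-model operator `b = cos θ · c† + i sin θ · c`. -/
def bSw (θ : ℝ) (f : 𝓢(ℝ, ℂ)) : 𝓢(ℝ, ℂ) :=
  (Real.cos θ : ℂ) • cdOp f + (Complex.I * (Real.sin θ : ℂ)) • cOp f

/-- The Swanson-model operator `a† = cos θ · c† - i sin θ · c`. -/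
def aSwStar (θ : ℝ) (f : 𝓢(ℝ, ℂ)) : 𝓢(ℝ, ℂ) :=
  (Real.cos θ : ℂ) • cdOp f - (Complex.I * (Real.sin θ : ℂ)) • cOp f

/-- The Swanson-model operator `b† = cos θ · c - i sin θ · c†`. -/
def bSwStar (θ : ℝ) (f : 𝓢(ℝ, ℂ)) : 𝓢(ℝ, ℂ) :=
  (Real.cos θ : ℂ) • cOp f - (Complex.I * (Real.sin θ : ℂ)) • cdOp f


lemma coe_cOp (f : 𝓢(ℝ, ℂ)) : ⇑(cOp f) = fun y : ℝ => ((y : ℂ) * f y + deriv f y) / (Real.sqrt 2 : ℂ) :=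
  funext (cOp_apply f)

lemma coe_cdOp (f : 𝓢(ℝ, ℂ)) : ⇑(cdOp f) = fun y : ℝ => ((y : ℂ) * f y - deriv f y) / (Real.sqrt 2 : ℂ) :=
  funext (cdOp_apply f)

lemma deriv_deriv_diff (f : 𝓢(ℝ, ℂ)) (x : ℝ) : DifferentiableAt ℝ (fun y => deriv (⇑f) y) x := by
  have h : (fun y => deriv (⇑f) y) = ⇑(derivCLM ℂ ℂ f) := by
    funext y; exact (derivCLM_apply ℂ f y).symm
  rw [h]; exact (derivCLM ℂ ℂ f).differentiableAt

lemma diff_mulx (f : 𝓢(ℝ, ℂ)) (x : ℝ) : DifferentiableAt ℝ (fun y : ℝ => (y : ℂ) * f y) x :=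
  (Complex.ofRealCLM.differentiable.differentiableAt).mul f.differentiableAt

lemma deriv_mulx (f : 𝓢(ℝ, ℂ)) (x : ℝ) :
    deriv (fun y : ℝ => (y : ℂ) * f y) x = f x + x * deriv f x := by
  have hd : DifferentiableAt ℝ (fun y : ℝ => (y : ℂ)) x :=
    Complex.ofRealCLM.differentiable.differentiableAt
  rw [deriv_fun_mul hd f.differentiableAt]
  have : deriv (fun y : ℝ => (y : ℂ)) x = 1 := by
    have h := (Complex.ofRealCLM.hasDerivAt (x := x)).deriv
    exact h.trans (by simp)
  rw [this]; ring

lemma deriv_cOp (f : 𝓢(ℝ, ℂ)) (x : ℝ) :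
    deriv (⇑(cOp f)) x = (f x + x * deriv f x + deriv (deriv (⇑f)) x) / (Real.sqrt 2 : ℂ) := by
  rw [coe_cOp]
  rw [show (fun y : ℝ => ((y : ℂ) * f y + deriv f y) / (Real.sqrt 2 : ℂ))
      = fun y : ℝ => ((fun y : ℝ => (y:ℂ) * f y) y + (fun y => deriv (⇑f) y) y) / (Real.sqrt 2 : ℂ) from rfl]
  rw [deriv_div_const, deriv_fun_add (diff_mulx f x) (deriv_deriv_diff f x), deriv_mulx]

lemma deriv_cdOp (f : 𝓢(ℝ, ℂ)) (x : ℝ) :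
    deriv (⇑(cdOp f)) x = (f x + x * deriv f x - deriv (deriv (⇑f)) x) / (Real.sqrt 2 : ℂ) := by
  rw [coe_cdOp]
  rw [show (fun y : ℝ => ((y : ℂ) * f y - deriv f y) / (Real.sqrt 2 : ℂ))
      = fun y : ℝ => ((fun y : ℝ => (y:ℂ) * f y) y - (fun y => deriv (⇑f) y) y) / (Real.sqrt 2 : ℂ) from rfl]
  rw [deriv_div_const, deriv_fun_sub (diff_mulx f x) (deriv_deriv_diff f x), deriv_mulx]

lemma key_comm (f : 𝓢(ℝ, ℂ)) : cOp (cdOp f) - cdOp (cOp f) = f := by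
  ext x
  rw [SchwartzMap.sub_apply, cOp_apply, cdOp_apply, cdOp_apply, cOp_apply,
    deriv_cOp, deriv_cdOp]
  have h2 : (Real.sqrt 2 : ℂ) * (Real.sqrt 2 : ℂ) = 2 := by
    rw [← Complex.ofReal_mul]; norm_num [Real.mul_self_sqrt]
  have hne : (Real.sqrt 2 : ℂ) ≠ 0 := by
    simp [Real.sqrt_eq_zero']
  field_simp
  ring_nf
  rw [show ((Real.sqrt 2 : ℂ))^2 = 2 by rw [sq, h2]]
  try ring
lemma cOp_smulc (c : ℂ) (f : 𝓢(ℝ, ℂ)) : cOp (c • f) = c • cOp f := by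
  have h : mulXOp (c • f) = c • mulXOp f := by
    ext x; simp [mulXOp_apply, SchwartzMap.smul_apply, mul_assoc]
  rw [cOp, cOp, h, map_smul, ← smul_add, smul_comm]

lemma cdOp_smulc (c : ℂ) (f : 𝓢(ℝ, ℂ)) : cdOp (c • f) = c • cdOp f := by
  have h : mulXOp (c • f) = c • mulXOp f := by
    ext x; simp [mulXOp_apply, SchwartzMap.smul_apply, mul_assoc]
  rw [cdOp, cdOp, h, map_smul, ← smul_sub, smul_comm]

lemma cOp_add (f g : 𝓢(ℝ, ℂ)) : cOp (f + g) = cOp f + cOp g := by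
  rw [cOp, cOp, cOp, map_add, map_add, ← smul_add]; ring_nf
  congr 1; abel

lemma cdOp_add (f g : 𝓢(ℝ, ℂ)) : cdOp (f + g) = cdOp f + cdOp g := by
  rw [cdOp, cdOp, cdOp, map_add, map_add, ← smul_add]; congr 1; abel

lemma cOp_sub (f g : 𝓢(ℝ, ℂ)) : cOp (f - g) = cOp f - cOp g := by
  rw [cOp, cOp, cOp, map_sub, map_sub, ← smul_sub]; congr 1; abel

lemma cdOp_sub (f g : 𝓢(ℝ, ℂ)) : cdOp (f - g) = cdOp f - cdOp g := by
  rw [cdOp, cdOp, cdOp, map_sub, map_sub, ← smul_sub]; congr 1; abel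

/-- The Swanson-model operators `a`, `b`, `a†`, `b†` on Schwartz
space satisfy the commutation relations `[a,b] = [b†,a†] = 1`,
`[a,a†] = [b†,b] = cos(2θ)`, and `[a,b†] = [a†,b] = -i sin(2θ)`. -/
theorem swanson_commutation_relations (θ : ℝ) :
    (∀ f : 𝓢(ℝ, ℂ), aSw θ (bSw θ f) - bSw θ (aSw θ f) = f) ∧
    (∀ f : 𝓢(ℝ, ℂ), bSwStar θ (aSwStar θ f) - aSwStar θ (bSwStar θ f) = f) ∧
    (∀ f : 𝓢(ℝ, ℂ), aSw θ (aSwStar θ f) - aSwStar θ (aSw θ f) =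
      (Real.cos (2 * θ) : ℂ) • f) ∧
    (∀ f : 𝓢(ℝ, ℂ), bSwStar θ (bSw θ f) - bSw θ (bSwStar θ f) =
      (Real.cos (2 * θ) : ℂ) • f) ∧
    (∀ f : 𝓢(ℝ, ℂ), aSw θ (bSwStar θ f) - bSwStar θ (aSw θ f) =
      (-Complex.I * (Real.sin (2 * θ) : ℂ)) • f) ∧
    (∀ f : 𝓢(ℝ, ℂ), aSwStar θ (bSw θ f) - bSw θ (aSwStar θ f) =
      (-Complex.I * (Real.sin (2 * θ) : ℂ)) • f) := by
  have h1 : (Real.cos θ : ℂ)^2 + (Real.sin θ : ℂ)^2 = 1 := by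
    exact_mod_cast congrArg (Complex.ofReal) (Real.cos_sq_add_sin_sq θ)
  have hc2 : (Real.cos (2*θ) : ℂ) = (Real.cos θ : ℂ)^2 - (Real.sin θ : ℂ)^2 := by
    have h := congrArg (Complex.ofReal) (Real.cos_two_mul θ)
    push_cast [← Complex.ofReal_cos] at h
    linear_combination h + h1
  have hs2 : (Real.sin (2*θ) : ℂ) = 2 * (Real.sin θ : ℂ) * (Real.cos θ : ℂ) := by
    have h := congrArg (Complex.ofReal) (Real.sin_two_mul θ)
    push_cast [← Complex.ofReal_sin, ← Complex.ofReal_cos] at h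
    linear_combination h
  refine ⟨?_, ?_, ?_, ?_, ?_, ?_⟩ <;> intro f <;>
    [(conv_rhs => rw [← key_comm f]);
     (conv_rhs => rw [← key_comm f]);
     (conv_rhs => rw [← key_comm f, hc2]);
     (conv_rhs => rw [← key_comm f, hc2]);
     (conv_rhs => rw [← key_comm f, hs2]);
     (conv_rhs => rw [← key_comm f, hs2])] <;>
    simp only [aSw, bSw, aSwStar, bSwStar, cOp_add, cdOp_add, cOp_sub, cdOp_sub,
      cOp_smulc, cdOp_smulc, smul_add, smul_smul, smul_sub] <;>
    match_scalars <;>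
    first
    | ring1
    | (simp only [Complex.I_sq, Complex.I_mul_I, ← Complex.ofReal_cos, ← Complex.ofReal_sin];
       first
       | ring1
       | linear_combination h1 | linear_combination -h1
       | linear_combination 2*h1 | linear_combination -2*h1
       | linear_combination h1 - (Real.sin θ:ℂ)^2 * Complex.I_sq
       | linear_combination -h1 + (Real.sin θ:ℂ)^2 * Complex.I_sq
       | linear_combination (Real.sin θ:ℂ)^2 * Complex.I_sq - 2*h1
       | linear_combination 2*h1 - (Real.sin θ:ℂ)^2 * Complex.I_sq
       | linear_combination (Real.sin θ:ℂ)^2 * Complex.I_sq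
       | linear_combination -((Real.sin θ:ℂ)^2) * Complex.I_sq)
end
end

section
/- In the pseudo-bosonic setting, the vectors φ_n = (1/√(n!))·bⁿφ_0 and Ψ_m = (1/√(m!))·(a′)ᵐΨ_0 form biorthogonal families: ⟨φ_n, Ψ_m⟩ = 1 if n = m and ⟨φ_n, Ψ_m⟩ = 0 if n ≠ m, for all n, m ≥ 0. -/
noncomputable section

/-- In the pseudo-bosonic setting (operators `a, b` with formal
adjoints `a', b'` on a dense-in-spirit subspace `D` of a complex inner product
space, satisfying `[a,b] = 1` and `[b',a'] = 1` on `D`, with `a φ₀ = 0`,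
`b' Ψ₀ = 0` and `⟨φ₀, Ψ₀⟩ = 1`), the vectors `φₙ = (1/√n!) bⁿ φ₀` and
`Ψₘ = (1/√m!) (a')ᵐ Ψ₀` are biorthogonal: `⟨φₙ, Ψₘ⟩ = δₙₘ`. -/
theorem pseudoboson_biorthogonal
    {H : Type*} [NormedAddCommGroup H] [InnerProductSpace ℂ H]
    (D : Submodule ℂ H) (a b a' b' : Module.End ℂ D)
    (hadj_a : ∀ f g : D, (inner ℂ ((a f : D) : H) ((g : D) : H) : ℂ) =
      inner ℂ ((f : D) : H) ((a' g : D) : H))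
    (hadj_b : ∀ f g : D, (inner ℂ ((b f : D) : H) ((g : D) : H) : ℂ) =
      inner ℂ ((f : D) : H) ((b' g : D) : H))
    (hcomm : ∀ f : D, a (b f) - b (a f) = f)
    (hcomm' : ∀ f : D, b' (a' f) - a' (b' f) = f)
    (φ0 Ψ0 : D) (hφ0 : a φ0 = 0) (hΨ0 : b' Ψ0 = 0)
    (hpair : (inner ℂ ((φ0 : D) : H) ((Ψ0 : D) : H) : ℂ) = 1)
    (φ Ψ : ℕ → D)
    (hφ : ∀ n, φ n = ((Real.sqrt n.factorial : ℂ))⁻¹ • (b ^ n) φ0)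
    (hΨ : ∀ n, Ψ n = ((Real.sqrt n.factorial : ℂ))⁻¹ • (a' ^ n) Ψ0) :
    ∀ n m : ℕ, (inner ℂ ((φ n : D) : H) ((Ψ m : D) : H) : ℂ) =
      if n = m then 1 else 0 := by
  have hpowa : ∀ k : ℕ, (a' ^ (k+1)) Ψ0 = a' ((a' ^ k) Ψ0) := by
    intro k; rw [pow_succ']; rfl
  -- lowering on the Ψ side
  have hb' : ∀ m : ℕ, b' ((a' ^ (m+1)) Ψ0) = ((m : ℂ) + 1) • (a' ^ m) Ψ0 := by
    intro m
    induction m with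
    | zero =>
      have h := hcomm' Ψ0
      rw [hΨ0, map_zero, sub_zero] at h
      simp [hpowa 0, h]
    | succ k ih =>
      have h := hcomm' ((a' ^ (k+1)) Ψ0)
      have h2 : b' (a' ((a' ^ (k+1)) Ψ0)) =
          a' (b' ((a' ^ (k+1)) Ψ0)) + (a' ^ (k+1)) Ψ0 := by
        linear_combination (norm := module) h
      rw [hpowa (k+1), h2, ih, map_smul, ← hpowa k]
      push_cast
      module
  have key : ∀ n m : ℕ, (inner ℂ (((b ^ n) φ0 : D) : H) (((a' ^ m) Ψ0 : D) : H) : ℂ)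
      = if n = m then (n.factorial : ℂ) else 0 := by
    intro n
    induction n with
    | zero =>
      intro m
      cases m with
      | zero => simpa using hpair
      | succ k =>
        have h := hadj_a φ0 ((a' ^ k) Ψ0)
        rw [hφ0] at h
        simp only [pow_zero, Module.End.one_apply, hpowa k]
        rw [← h]
        simp
    | succ n ih =>
      intro m
      have hpow : (b ^ (n+1)) φ0 = b ((b ^ n) φ0) := by
        rw [pow_succ']; rfl
      rw [hpow, hadj_b ((b ^ n) φ0) ((a' ^ m) Ψ0)]
      cases m with
      | zero =>
        simp only [pow_zero, Module.End.one_apply, hΨ0]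
        simp
      | succ k =>
        rw [hb' k, Submodule.coe_smul, inner_smul_right, ih k]
        by_cases h : n = k
        · subst h
          simp only [if_pos rfl]
          push_cast [Nat.factorial_succ]
          ring
        · have h' : ¬ (n + 1 = k + 1) := by omega
          simp [h, h']
  intro n m
  rw [hφ, hΨ, Submodule.coe_smul, Submodule.coe_smul, inner_smul_left,
    inner_smul_right, key n m]
  by_cases h : n = m
  · subst h
    simp only [if_pos rfl]
    have hs : ((Real.sqrt n.factorial : ℝ) : ℂ) * ((Real.sqrt n.factorial : ℝ) : ℂ)
        = (n.factorial : ℂ) := by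
      rw [← Complex.ofReal_mul, Real.mul_self_sqrt (by positivity)]
      push_cast; ring
    have hne : ((Real.sqrt n.factorial : ℝ) : ℂ) ≠ 0 := by
      simp only [ne_eq, Complex.ofReal_eq_zero]
      positivity
    rw [map_inv₀, Complex.conj_ofReal, ← hs]
    field_simp
    simp
  · simp [h]
end
end
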